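/- Glynn's formula with repeated rows: For every n×n complex matrix A = (a_{ij}) and every q = (q_1,…,q_n) ∈ ℕ^n, Per(A_{q,𝟏}) = δ_{|q|,n} · 2^{-n} · Σ_{x ∈ {-1,1}^n} x_1⋯x_n · ∏_{i=1}^n ( Σ_{j=1}^n a_{ij} x_j )^{q_i}, where δ is the Kronecker symbol and 𝟏 = (1,…,1). -/

import Mathlib

open BigOperators Matrix

/-- The list of row indices of `A_{p,·}`: each index `i` repeated `p i` times, in order. -/
def repList {m : ℕ} (p : Fin m → ℕ) : List (Fin m) :=
  (List.finRange m).flatMap fun i => List.replicate (p i) i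

lemma repList_length {m : ℕ} (p : Fin m → ℕ) : (repList p).length = ∑ i, p i := by
  simp only [repList, List.length_flatMap, Fin.sum_univ_def]
  congr 1
  apply List.map_congr_left
  intro i _
  simp

/-- The matrix `A_{p,q}`: row `i` repeated `p i` times, column `j` repeated `q j` times. -/
def repMat {m : ℕ} (A : Matrix (Fin m) (Fin m) ℂ) (p q : Fin m → ℕ) :
    Matrix (Fin (∑ i, p i)) (Fin (∑ j, q j)) ℂ :=
  Matrix.of fun r c =>
    A ((repList p).get (Fin.cast (repList_length p).symm r))
      ((repList q).get (Fin.cast (repList_length q).symm c))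

/-- `Per(A_{p,q})`; by convention `0` when the matrix is not square. -/
noncomputable def perRep {m : ℕ} (A : Matrix (Fin m) (Fin m) ℂ) (p q : Fin m → ℕ) : ℂ :=
  if h : (∑ i, p i) = (∑ j, q j) then
    (Matrix.of fun r c : Fin (∑ i, p i) => repMat A p q r (Fin.cast h c)).permanent
  else 0



open Finset in
lemma fiber_sum {k : ℕ} (f : Fin k → Fin k) :
    ∑ j, (univ.filter fun i => f i = j).card = k := by
  rw [← Finset.card_eq_sum_card_fiberwise (fun i _ => Finset.mem_univ (f i))]
  simp

open Finset in
lemma fiber_card_one_of_bij {k : ℕ} {f : Fin k → Fin k} (hf : Function.Bijective f) (j : Fin k) :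
    (univ.filter fun i => f i = j).card = 1 := by
  have : (univ.filter fun i => f i = j) = {(Equiv.ofBijective f hf).symm j} := by
    ext i
    simp only [Finset.mem_filter, Finset.mem_univ, true_and, Finset.mem_singleton,
      Equiv.eq_symm_apply]
    exact ⟨fun h => h ▸ rfl, fun h => h⟩
  rw [this, Finset.card_singleton]

open Finset in
lemma bij_of_fibers_odd {k : ℕ} {f : Fin k → Fin k}
    (h : ∀ j, Odd ((univ.filter fun i => f i = j).card)) : Function.Bijective f := by
  have h1 : ∀ j ∈ (univ : Finset (Fin k)), 1 ≤ (univ.filter fun i => f i = j).card :=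
    fun j _ => (h j).pos
  have hsum : ∑ _j : Fin k, (1 : ℕ) = ∑ j, (univ.filter fun i => f i = j).card := by
    rw [fiber_sum f]; simp
  have hone : ∀ j ∈ (univ : Finset (Fin k)), (1 : ℕ) = (univ.filter fun i => f i = j).card :=
    (Finset.sum_eq_sum_iff_of_le h1).mp hsum
  constructor
  · intro a b hab
    have ha : a ∈ univ.filter fun i => f i = f b := by simp [hab]
    have hb : b ∈ univ.filter fun i => f i = f b := by simp
    exact Finset.card_le_one.mp (hone (f b) (mem_univ _)).ge a ha b hb
  · intro j
    obtain ⟨i, hi⟩ := Finset.card_pos.mp (by rw [← hone j (mem_univ _)]; norm_num)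
    exact ⟨i, (Finset.mem_filter.mp hi).2⟩

open Finset in
lemma glynn_core {k : ℕ} (B : Matrix (Fin k) (Fin k) ℂ) :
    (∑ x : Fin k → ({-1, 1} : Finset ℤ),
        (∏ j, ((x j : ℤ) : ℂ)) * ∏ i, (∑ j, B i j * ((x j : ℤ) : ℂ)))
      = (2 ^ k : ℂ) * B.permanent := by
  classical
  have expand : ∀ x : Fin k → ({-1, 1} : Finset ℤ),
      (∏ i, ∑ j, B i j * ((x j : ℤ) : ℂ))
        = ∑ f : Fin k → Fin k, ∏ i, B i (f i) * ((x (f i) : ℤ) : ℂ) := by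
    intro x
    rw [Finset.prod_univ_sum]
    rw [Fintype.piFinset_univ]
  calc
    (∑ x : Fin k → ({-1, 1} : Finset ℤ),
        (∏ j, ((x j : ℤ) : ℂ)) * ∏ i, (∑ j, B i j * ((x j : ℤ) : ℂ)))
      = ∑ f : Fin k → Fin k, ∑ x : Fin k → ({-1, 1} : Finset ℤ),
          (∏ j, ((x j : ℤ) : ℂ)) * ∏ i, (B i (f i) * ((x (f i) : ℤ) : ℂ)) := by
        simp_rw [expand, Finset.mul_sum]
        exact Finset.sum_comm
    _ = ∑ f : Fin k → Fin k, (∏ i, B i (f i)) *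
          ∏ j, ((-1 : ℂ) ^ ((univ.filter fun i => f i = j).card + 1) + 1) := by
        refine Finset.sum_congr rfl fun f _ => ?_
        have step1 : ∀ x : Fin k → ({-1, 1} : Finset ℤ),
            (∏ j, ((x j : ℤ) : ℂ)) * ∏ i, (B i (f i) * ((x (f i) : ℤ) : ℂ))
              = (∏ i, B i (f i)) *
                ∏ j, ((x j : ℤ) : ℂ) ^ ((univ.filter fun i => f i = j).card + 1) := by
          intro x
          have : (∏ i, ((x (f i) : ℤ) : ℂ))
              = ∏ j, ((x j : ℤ) : ℂ) ^ (univ.filter fun i => f i = j).card := by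
            rw [← Finset.prod_fiberwise' univ f (fun j => ((x j : ℤ) : ℂ))]
            refine Finset.prod_congr rfl fun j _ => ?_
            rw [Finset.prod_const]
          rw [Finset.prod_mul_distrib, this, mul_left_comm]
          congr 1
          rw [← Finset.prod_mul_distrib]
          exact Finset.prod_congr rfl fun j _ => by rw [mul_comm, ← pow_succ]
        simp_rw [step1]
        rw [← Finset.mul_sum]
        congr 1
        refine Eq.symm ?_
        calc ∏ j, ((-1 : ℂ) ^ ((univ.filter fun i => f i = j).card + 1) + 1)
            = ∏ j, ∑ y : ({-1, 1} : Finset ℤ),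
                ((y : ℤ) : ℂ) ^ ((univ.filter fun i => f i = j).card + 1) := by
              refine Finset.prod_congr rfl fun j _ => ?_
              rw [Finset.sum_coe_sort _
                  (fun z : ℤ => ((z : ℂ)) ^ ((univ.filter fun i => f i = j).card + 1)),
                Finset.sum_pair (by norm_num : (-1 : ℤ) ≠ 1)]
              push_cast
              ring
          _ = ∑ x : Fin k → ({-1, 1} : Finset ℤ),
                ∏ j, ((x j : ℤ) : ℂ) ^ ((univ.filter fun i => f i = j).card + 1) := by
              rw [Finset.prod_univ_sum, Fintype.piFinset_univ]
    _ = ∑ f : Fin k → Fin k,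
          (if Function.Bijective f then (2 : ℂ) ^ k * ∏ i, B i (f i) else 0) := by
        refine Finset.sum_congr rfl fun f _ => ?_
        by_cases hf : Function.Bijective f
        · rw [if_pos hf]
          have : ∀ j, ((-1 : ℂ) ^ ((univ.filter fun i => f i = j).card + 1) + 1) = 2 := by
            intro j
            rw [fiber_card_one_of_bij hf]
            norm_num
          simp_rw [this]
          rw [Finset.prod_const, mul_comm]
          simp
        · rw [if_neg hf]
          have : ∃ j, ¬ Odd ((univ.filter fun i => f i = j).card) := by
            by_contra hc
            push_neg at hc
            exact hf (bij_of_fibers_odd hc)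
          obtain ⟨j, hj⟩ := this
          rw [Nat.not_odd_iff_even] at hj
          have hodd : Odd ((univ.filter fun i => f i = j).card + 1) := Even.add_one hj
          have hz : (∏ j, ((-1 : ℂ) ^ ((univ.filter fun i => f i = j).card + 1) + 1)) = 0 :=
            Finset.prod_eq_zero (Finset.mem_univ j) (by rw [hodd.neg_one_pow]; norm_num)
          rw [hz, mul_zero]
    _ = (2 ^ k : ℂ) * B.permanent := by
        rw [← Finset.sum_filter]
        rw [Matrix.permanent, Finset.mul_sum]
        refine Finset.sum_bij' (i := fun f hf => (Equiv.ofBijective f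
            (Finset.mem_filter.mp hf).2).symm)
          (j := fun σ _ => ⇑σ.symm) ?_ ?_ ?_ ?_ ?_
        · intro a ha; exact Finset.mem_univ _
        · intro σ _; exact Finset.mem_filter.mpr ⟨Finset.mem_univ _, σ.symm.bijective⟩
        · intro f hf
          rfl
        · intro σ _
          refine Equiv.ext fun i => (Equiv.ofBijective (⇑σ.symm) σ.symm.bijective).injective ?_
          exact ((Equiv.ofBijective (⇑σ.symm) σ.symm.bijective).apply_symm_apply i).trans
            (σ.symm_apply_apply i).symm
        · intro f hf
          have hfb := (Finset.mem_filter.mp hf).2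
          congr 1
          rw [← Equiv.prod_comp (Equiv.ofBijective f hfb)
            (fun i => B ((Equiv.ofBijective f hfb).symm i) i)]
          refine Finset.prod_congr rfl fun a _ => ?_
          rw [Equiv.symm_apply_apply]
          rfl

lemma map_prod_repList {m : ℕ} (q : Fin m → ℕ) (F : Fin m → ℂ) :
    ((repList q).map F).prod = ∏ i, F i ^ q i := by
  rw [repList, List.map_flatMap]
  simp only [List.map_replicate]
  rw [List.flatMap, List.prod_flatten, List.map_map]
  rw [Fin.prod_univ_def]
  congr 1
  apply List.map_congr_left
  intro i _
  simp [List.prod_replicate]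

lemma prod_repList {m : ℕ} (q : Fin m → ℕ) (F : Fin m → ℂ) :
    (∏ r : Fin (∑ i, q i), F ((repList q).get (Fin.cast (repList_length q).symm r)))
      = ∏ i, F i ^ q i := by
  rw [← map_prod_repList q F, ← Fin.prod_univ_fun_getElem (repList q) F]
  exact (Fintype.prod_equiv (finCongr (repList_length q))
    (fun r => F ((repList q)[r.1])) _ (fun r => rfl)).symm

lemma repList_one (n : ℕ) : repList (fun _ : Fin n => 1) = List.finRange n := by
  simp [repList]

lemma permanent_reindex {k n : ℕ} (e : Fin k ≃ Fin n) (M : Matrix (Fin n) (Fin n) ℂ) :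
    (M.submatrix e e).permanent = M.permanent := by
  unfold Matrix.permanent
  refine Fintype.sum_bijective e.permCongr e.permCongr.bijective _ _ (fun σ => ?_)
  rw [← Equiv.prod_comp e (fun i => M ((e.permCongr σ) i) i)]
  refine Finset.prod_congr rfl fun i _ => ?_
  simp [Matrix.submatrix_apply, Equiv.permCongr_apply]

/-- **Glynn's formula with repeated rows.** -/
theorem glynn_formula_repeated_rows (n : ℕ) (A : Matrix (Fin n) (Fin n) ℂ) (q : Fin n → ℕ) :
    perRep A q (fun _ => 1) =
      (if (∑ i, q i) = n then (1 : ℂ) else 0) * (1 / 2 ^ n : ℂ) *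
        ∑ x : Fin n → ({-1, 1} : Finset ℤ),
          (∏ i, ((x i : ℤ) : ℂ)) * ∏ i, (∑ j, A i j * ((x j : ℤ) : ℂ)) ^ q i := by
  classical
  by_cases h : (∑ i, q i) = n
  · have hd : (∑ i, q i) = ∑ j : Fin n, (fun _ : Fin n => (1 : ℕ)) j := by simpa using h
    rw [if_pos h, one_mul]
    unfold perRep
    rw [dif_pos hd]
    set e : Fin (∑ i, q i) ≃ Fin n := finCongr h with he
    set g : Fin (∑ i, q i) → Fin n :=
      fun r => (repList q).get (Fin.cast (repList_length q).symm r) with hg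
    have hmat : (Matrix.of fun r c : Fin (∑ i, q i) =>
          repMat A q (fun _ => 1) r (Fin.cast hd c))
        = (Matrix.of fun r c : Fin n => A (g (e.symm r)) c).submatrix e e := by
      ext r c
      simp only [Matrix.of_apply, Matrix.submatrix_apply, repMat]
      congr 1
      apply Fin.ext
      simp [repList_one, List.get_eq_getElem, List.getElem_finRange, he]
    rw [hmat, permanent_reindex]
    have hcore := glynn_core (Matrix.of fun r c : Fin n => A (g (e.symm r)) c)
    have hprod : ∀ x : Fin n → ({-1, 1} : Finset ℤ),
        (∏ i : Fin n, ∑ j, (Matrix.of fun r c : Fin n => A (g (e.symm r)) c) i j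
            * ((x j : ℤ) : ℂ))
          = ∏ i, (∑ j, A i j * ((x j : ℤ) : ℂ)) ^ q i := by
      intro x
      have h1 : (∏ i : Fin n, ∑ j, A (g (e.symm i)) j * ((x j : ℤ) : ℂ))
          = ∏ r : Fin (∑ i, q i), (fun i => ∑ j, A i j * ((x j : ℤ) : ℂ)) (g r) := by
        exact Equiv.prod_comp e.symm fun r => (fun i => ∑ j, A i j * ((x j : ℤ) : ℂ)) (g r)
      simpa [Matrix.of_apply] using
        h1.trans (prod_repList q (fun i => ∑ j, A i j * ((x j : ℤ) : ℂ)))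
    have hsum : (∑ x : Fin n → ({-1, 1} : Finset ℤ),
          (∏ i, ((x i : ℤ) : ℂ)) * ∏ i, (∑ j, A i j * ((x j : ℤ) : ℂ)) ^ q i)
        = 2 ^ n * (Matrix.of fun r c : Fin n => A (g (e.symm r)) c).permanent := by
      rw [← hcore]
      exact Finset.sum_congr rfl fun x _ => by rw [hprod x]
    rw [hsum, one_div, inv_mul_cancel_left₀ (pow_ne_zero n two_ne_zero)]
  · have hd : ¬ ((∑ i, q i) = ∑ j : Fin n, (fun _ : Fin n => (1 : ℕ)) j) := by simpa using h
    rw [if_neg h, zero_mul, zero_mul]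
    unfold perRep
    rw [dif_neg hd]
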